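/- arXiv:0902.3965 — 3 statements merged into one kernel-verified Lean document; each statement's English description precedes it below -/
import Mathlib

section
/- The affine curve defined by Lind and Reichardt's equation has no rational points: for all rational numbers x and y, one has 2·y² ≠ 1 − 17·x⁴. -/
lemma lr_sq2 : IsSquare ((2:ZMod 17)) := by decide
lemma lr_sqneg : IsSquare ((-1:ZMod 17)) := by decide
lemma lr_17z : (17 : ZMod 17) = 0 := by decide

lemma lr_two_not_fourth_power : ∀ s t : ZMod 17, s ≠ 0 → 2 * s ^ 4 ≠ t ^ 4 := by decide

lemma lr_int_lemma (a c b : ℤ) (hc : c ≠ 0) (hg : Int.gcd a c = 1)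
    (h : 2 * b ^ 2 = c ^ 4 - 17 * a ^ 4) : False := by
  haveI : Fact (Nat.Prime 17) := ⟨by norm_num⟩
  have hp17 : Prime (17 : ℤ) := by norm_num
  -- Step 1 : 17 does not divide b
  have h17b : ¬ (17:ℤ) ∣ b := by
    intro hd
    have h17c : (17:ℤ) ∣ c := by
      have h1 : (17:ℤ) ∣ c ^ 4 := by
        have he : c ^ 4 = 2 * b ^ 2 + 17 * a ^ 4 := by linarith
        rw [he]
        exact dvd_add (Dvd.dvd.mul_left (hd.pow (by norm_num)) 2) ⟨a ^ 4, rfl⟩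
      exact hp17.dvd_of_dvd_pow h1
    have h17a : (17:ℤ) ∣ a := by
      have h2 : (17:ℤ)^2 ∣ 17 * a ^ 4 := by
        have he : 17 * a ^ 4 = c ^ 4 - 2 * b ^ 2 := by linarith
        rw [he]
        refine dvd_sub ?_ ?_
        · exact dvd_trans (pow_dvd_pow 17 (by norm_num)) (pow_dvd_pow_of_dvd h17c 4)
        · exact Dvd.dvd.mul_left (pow_dvd_pow_of_dvd hd 2) 2
      have h3 : (17:ℤ) ∣ a ^ 4 := by
        rcases h2 with ⟨t, ht⟩
        exact ⟨t, by linarith⟩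
      exact hp17.dvd_of_dvd_pow h3
    have h5 : (17:ℤ) ∣ (Int.gcd a c : ℤ) := Int.dvd_coe_gcd h17a h17c
    rw [hg] at h5
    norm_num at h5
  have hb0 : b ≠ 0 := by rintro rfl; exact h17b (dvd_zero _)
  -- Step 2 : odd part of |b|
  set B := b.natAbs with hB
  have hB0 : B ≠ 0 := Int.natAbs_ne_zero.mpr hb0
  set m := ordCompl[2] B with hm
  have hmdvdB : m ∣ B := Nat.ordCompl_dvd B 2
  have hmodd : Odd m := Nat.odd_iff.mpr (by
    have h2 := Nat.not_dvd_ordCompl Nat.prime_two hB0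
    omega)
  have hm0 : m ≠ 0 := (Nat.ordCompl_pos 2 hB0).ne'
  have hmb : (m:ℤ) ∣ b :=
    (Int.natCast_dvd_natCast.mpr hmdvdB).trans (Int.natAbs_dvd.mpr dvd_rfl)
  have h17m : ¬ (17:ℤ) ∣ (m:ℤ) := fun hdm => h17b (hdm.trans hmb)
  -- coprimality facts
  have hgc : Int.gcd c m = 1 := by
    by_contra hne
    obtain ⟨p, hp, hpd⟩ := Nat.exists_prime_and_dvd hne
    have hpc : (p:ℤ) ∣ c :=
      Int.dvd_natAbs.mp (Int.natCast_dvd_natCast.mpr (hpd.trans (Nat.gcd_dvd_left _ _)))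
    have hpb : (p:ℤ) ∣ b :=
      (Int.natCast_dvd_natCast.mpr (hpd.trans (Nat.gcd_dvd_right _ _))).trans hmb
    have hppz : Prime (p:ℤ) := Int.prime_iff_natAbs_prime.mpr (by simpa using hp)
    have hpd17a : (p:ℤ) ∣ 17 * a ^ 4 := by
      have he : 17 * a ^ 4 = c ^ 4 - 2 * b ^ 2 := by linarith
      rw [he]
      exact dvd_sub (dvd_pow hpc (by norm_num)) (Dvd.dvd.mul_left (dvd_pow hpb (by norm_num)) 2)
    rcases hppz.dvd_mul.mp hpd17a with h17p | hpa
    · have hp17' : p ∣ 17 := by exact_mod_cast h17p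
      have hpeq : p = 17 := (Nat.prime_dvd_prime_iff_eq hp (by norm_num)).mp hp17'
      exact h17b (by exact_mod_cast hpeq ▸ hpb)
    · have hpa' : (p:ℤ) ∣ a := hppz.dvd_of_dvd_pow hpa
      have h5 : (p:ℤ) ∣ (Int.gcd a c : ℤ) := Int.dvd_coe_gcd hpa' hpc
      rw [hg] at h5
      have hp1 : p ∣ 1 := by exact_mod_cast h5
      exact hp.one_lt.ne' (Nat.dvd_one.mp hp1)
  have hga : Int.gcd a m = 1 := by
    by_contra hne
    obtain ⟨p, hp, hpd⟩ := Nat.exists_prime_and_dvd hne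
    have hpa : (p:ℤ) ∣ a :=
      Int.dvd_natAbs.mp (Int.natCast_dvd_natCast.mpr (hpd.trans (Nat.gcd_dvd_left _ _)))
    have hpb : (p:ℤ) ∣ b :=
      (Int.natCast_dvd_natCast.mpr (hpd.trans (Nat.gcd_dvd_right _ _))).trans hmb
    have hppz : Prime (p:ℤ) := Int.prime_iff_natAbs_prime.mpr (by simpa using hp)
    have hpc4 : (p:ℤ) ∣ c ^ 4 := by
      have he : c ^ 4 = 2 * b ^ 2 + 17 * a ^ 4 := by linarith
      rw [he]
      exact dvd_add (Dvd.dvd.mul_left (dvd_pow hpb (by norm_num)) 2)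
        (Dvd.dvd.mul_left (dvd_pow hpa (by norm_num)) 17)
    have hpc : (p:ℤ) ∣ c := hppz.dvd_of_dvd_pow hpc4
    have h5 : (p:ℤ) ∣ (Int.gcd a c : ℤ) := Int.dvd_coe_gcd hpa hpc
    rw [hg] at h5
    have hp1 : p ∣ 1 := by exact_mod_cast h5
    exact hp.one_lt.ne' (Nat.dvd_one.mp hp1)
  -- Step 3 : Jacobi symbol computation : J(17 | m) = 1
  have hdvd : (m:ℤ) ∣ c ^ 4 - 17 * a ^ 4 := by
    rw [← h]; exact Dvd.dvd.mul_left (dvd_pow hmb (by norm_num)) 2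
  have hcong : (17 * a ^ 4) % (m:ℤ) = (c ^ 4) % (m:ℤ) :=
    Int.modEq_iff_dvd.mpr (by simpa using hdvd)
  have hJ1 : jacobiSym (17 * a ^ 4) m = jacobiSym (c ^ 4) m := jacobiSym.mod_left' hcong
  have hJc : jacobiSym (c ^ 4) m = 1 := by
    rw [show c ^ 4 = (c ^ 2) ^ 2 by ring]
    refine jacobiSym.sq_one' ?_
    exact Int.isCoprime_iff_gcd_eq_one.mp
      ((Int.isCoprime_iff_gcd_eq_one.mpr hgc).pow_left)
  have hJa : jacobiSym ((a ^ 2) ^ 2) m = 1 := by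
    refine jacobiSym.sq_one' ?_
    exact Int.isCoprime_iff_gcd_eq_one.mp
      ((Int.isCoprime_iff_gcd_eq_one.mpr hga).pow_left)
  have hJ17 : jacobiSym 17 m = 1 := by
    have := jacobiSym.mul_left 17 (a ^ 4) m
    rw [hJ1, hJc, show (a:ℤ) ^ 4 = (a ^ 2) ^ 2 by ring, hJa, mul_one] at this
    exact this.symm
  -- Step 4 : quadratic reciprocity
  have hJm17 : jacobiSym m 17 = 1 := by
    have hrec := jacobiSym.quadratic_reciprocity_one_mod_four
      (by norm_num : 17 % 4 = 1) hmodd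
    rw [show ((17:ℕ):ℤ) = (17:ℤ) by norm_num, hJ17] at hrec
    exact hrec.symm
  -- Step 5 : m is a square mod 17
  have hsqm : IsSquare ((m:ℤ) : ZMod 17) := ZMod.isSquare_of_jacobiSym_eq_one hJm17
  -- Step 6 : b is a square mod 17
  have hsqb : IsSquare ((b:ZMod 17)) := by
    have hBfac : 2 ^ (B.factorization 2) * m = B := Nat.ordProj_mul_ordCompl_eq_self B 2
    have hbcases : b = (B:ℤ) ∨ b = -(B:ℤ) := Int.natAbs_eq b
    have hsq2 := lr_sq2
    have hsqneg := lr_sqneg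
    have hsqB : IsSquare ((B:ZMod 17)) := by
      rw [← hBfac]
      push_cast
      exact (hsq2.pow _).mul (by exact_mod_cast hsqm)
    rcases hbcases with h' | h'
    · rw [h']; exact_mod_cast hsqB
    · rw [h']
      push_cast
      rw [show -((B:ZMod 17)) = (-1) * (B:ZMod 17) by ring]
      exact hsqneg.mul hsqB
  -- Step 7 : conclude
  obtain ⟨s, hs⟩ := hsqb
  have hsne : s ≠ 0 := by
    intro h0
    rw [h0, mul_zero] at hs
    have : ((17:ℤ)) ∣ b := by
      exact_mod_cast (ZMod.intCast_zmod_eq_zero_iff_dvd b 17).mp hs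
    exact h17b this
  have hcast : (2 : ZMod 17) * (b:ZMod 17) ^ 2 = (c:ZMod 17) ^ 4 - 17 * (a:ZMod 17) ^ 4 := by
    have := congrArg (fun z : ℤ => (z : ZMod 17)) h
    push_cast at this
    exact this
  have hfin : 2 * s ^ 4 = (c:ZMod 17) ^ 4 := by
    rw [hs] at hcast
    have h17z := lr_17z
    rw [h17z] at hcast
    ring_nf at hcast ⊢
    linear_combination hcast
  exact lr_two_not_fourth_power s _ hsne hfin

/-- The Lind–Reichardt curve `2y² = 1 - 17x⁴` has no rational points. -/
theorem lind_reichardt_no_rational_points :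
    ∀ x y : ℚ, 2 * y ^ 2 ≠ 1 - 17 * x ^ 4 := by
  intro x y h
  set q : ℚ := y * (x.den : ℚ) ^ 2 with hq
  have hden : ((x.den : ℚ)) ≠ 0 := by
    exact_mod_cast x.den_nz
  have hxnum : (x.num : ℚ) = x * (x.den : ℚ) := by
    exact (Rat.mul_den_eq_num x).symm
  have key : (2 * q ^ 2 : ℚ) = ((x.den:ℚ) ^ 4 - 17 * (x.num:ℚ) ^ 4) := by
    rw [hq, hxnum]
    linear_combination ((x.den:ℚ)^4) * h
  -- q is an integer
  have hqden : q.den = 1 := by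
    have h2 : q ^ 2 = (((x.den:ℤ)^4 - 17 * x.num^4 : ℤ) : ℚ) / ((2:ℤ) : ℚ) := by
      push_cast
      linarith [key]
    have h3 : q ^ 2 = Rat.divInt ((x.den:ℤ)^4 - 17 * x.num^4) 2 := by
      rw [Rat.divInt_eq_div]; exact h2
    have h4 : ((q ^ 2).den : ℤ) ∣ 2 := by rw [h3]; exact Rat.den_dvd _ _
    have h5 : q.den ^ 2 ∣ 2 := by
      have := Rat.den_pow q 2
      rw [this] at h4
      exact_mod_cast h4
    nlinarith [Nat.le_of_dvd (by norm_num) h5, q.pos.le, q.den_pos]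
  have hqint : q = (q.num : ℚ) := by
    conv_lhs => rw [← Rat.num_div_den q]
    rw [hqden]; norm_num
  have keyZ : 2 * q.num ^ 2 = (x.den:ℤ) ^ 4 - 17 * x.num ^ 4 := by
    have : ((2 * q.num ^ 2 : ℤ) : ℚ) = (((x.den:ℤ) ^ 4 - 17 * x.num ^ 4 : ℤ) : ℚ) := by
      push_cast
      rw [← hqint]
      exact key
    exact_mod_cast this
  refine lr_int_lemma x.num (x.den:ℤ) q.num ?_ ?_ keyZ
  · exact_mod_cast x.den_nz
  · simpa [Int.gcd] using x.reduced
end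

section
/- Let k be a number field, let S be a finite set of nonzero prime ideals of the ring of integers O_k, and let 𝔮 be a nonzero prime ideal of O_k with 𝔮 ∉ S. Then there exists c ∈ k× such that: (i) σ(c) > 0 for every real embedding σ : k → ℝ; (ii) c is a square in the 𝔭-adic completion k_𝔭 for every 𝔭 ∈ S; and (iii) the 𝔮-adic valuation v_𝔮(c) is odd (so in particular c is not a square in k). -/
open IsDedekindDomain NumberField

open Multiplicative Filter Topology

local notation "ℤₘ₀" => WithZero (Multiplicative ℤ)

theorem isSquare_of_valued_lt {K : Type*} [Field K] [Valued K ℤₘ₀] [CompleteSpace K]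
    {c : K} (h : Valued.v (c - 1) < Valued.v (4 : K)) : IsSquare c := by
  have h4 : (4 : K) ≠ 0 := by
    intro hz
    rw [hz, map_zero] at h
    exact (not_lt.mpr zero_le') h
  set d : K := (1 - c) / 4 with hd_def
  have hd4 : 4 * d = 1 - c := by rw [hd_def]; field_simp
  have hd : Valued.v d < 1 := by
    have h1c : Valued.v (1 - c) < Valued.v (4 : K) := by
      rwa [show (1 : K) - c = -(c - 1) by ring, Valuation.map_neg]
    have hlt : Valued.v (4 : K) * Valued.v d < Valued.v (4 : K) * 1 := by
      rw [mul_one, ← map_mul, hd4]; exact h1c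
    exact lt_of_mul_lt_mul_left' hlt
  by_cases hd0 : d = 0
  · have : c = 1 := by
      have := hd4; rw [hd0, mul_zero] at this
      linear_combination this
    exact this ▸ IsSquare.one
  -- the sequence
  have hdne : Valued.v d ≠ 0 := (Valuation.ne_zero_iff _).mpr hd0
  set t : ℕ → K := fun n => Nat.rec 0 (fun _ s => -(d + s ^ 2)) n with ht_def
  have hts : ∀ n, t (n + 1) = -(d + t n ^ 2) := fun n => rfl
  have hbd : ∀ n, Valued.v (t n) ≤ Valued.v d := by
    intro n
    induction n with
    | zero => simp [ht_def]
    | succ n ih =>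
      rw [hts, Valuation.map_neg]
      refine le_trans (Valuation.map_add _ _ _) (max_le le_rfl ?_)
      rw [map_pow]
      calc Valued.v (t n) ^ 2 ≤ Valued.v d ^ 2 := pow_le_pow_left' ih 2
        _ ≤ Valued.v d * 1 := by rw [pow_two]; exact mul_le_mul_right hd.le _
        _ = Valued.v d := mul_one _
  have hdiff : ∀ n, Valued.v (t (n + 1) - t n) ≤ Valued.v d ^ (n + 1) := by
    intro n
    induction n with
    | zero => simp [hts, ht_def]
    | succ n ih =>
      have heq : t (n + 2) - t (n + 1) = (t n - t (n + 1)) * (t n + t (n + 1)) := by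
        rw [hts (n+1), hts n]; ring
      rw [heq, map_mul]
      have h1 : Valued.v (t n - t (n + 1)) ≤ Valued.v d ^ (n + 1) := by
        rw [Valuation.map_sub_swap]; exact ih
      have h2 : Valued.v (t n + t (n + 1)) ≤ Valued.v d :=
        le_trans (Valuation.map_add _ _ _) (max_le (hbd n) (hbd (n + 1)))
      calc Valued.v (t n - t (n+1)) * Valued.v (t n + t (n+1))
          ≤ Valued.v d ^ (n + 1) * Valued.v d := mul_le_mul' h1 h2
        _ = Valued.v d ^ (n + 2) := (pow_succ _ _).symm
  have hgap : ∀ n m, n ≤ m → Valued.v (t m - t n) ≤ Valued.v d ^ (n + 1) := by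
    intro n m hnm
    induction m, hnm using Nat.le_induction with
    | base => simp
    | succ m hnm ih =>
      have : t (m + 1) - t n = (t (m + 1) - t m) + (t m - t n) := by ring
      rw [this]
      refine le_trans (Valuation.map_add _ _ _) (max_le ?_ ih)
      exact le_trans (hdiff m) (pow_le_pow_right_of_le_one' hd.le (by omega))
  have hcau : CauchySeq t := by
    rw [(Valued.hasBasis_uniformity K ℤₘ₀).cauchySeq_iff]
    rintro γ -
    obtain ⟨a, ha⟩ := WithZero.ne_zero_iff_exists.mp hdne
    obtain ⟨g, hg⟩ := WithZero.ne_zero_iff_exists.mp (MonoidWithZeroHom.ValueGroup₀.embedding_unit_ne_zero γ)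
    have ha1 : Multiplicative.toAdd a < 0 := by
      have : (a : ℤₘ₀) < ((1 : Multiplicative ℤ) : ℤₘ₀) := by
        rw [ha]; exact_mod_cast hd
      rw [WithZero.coe_lt_coe] at this
      exact this
    refine ⟨(Multiplicative.toAdd g).natAbs + 1, ?_⟩
    have key : ∀ j : ℕ, (Multiplicative.toAdd g).natAbs + 1 ≤ j →
        Valued.v d ^ j < MonoidWithZeroHom.ValueGroup₀.embedding γ.1 := by
      intro j hj
      rw [← ha, ← hg, ← WithZero.coe_pow, WithZero.coe_lt_coe, ← Multiplicative.toAdd_lt,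
        toAdd_pow]
      have h1 : Multiplicative.toAdd a ≤ -1 := by omega
      have h2 : (j : ℤ) * Multiplicative.toAdd a ≤ (j : ℤ) * (-1) :=
        mul_le_mul_of_nonneg_left h1 (by positivity)
      have h3 : -((Multiplicative.toAdd g).natAbs : ℤ) ≤ Multiplicative.toAdd g := by omega
      have h4 : ((Multiplicative.toAdd g).natAbs : ℤ) + 1 ≤ (j : ℤ) := by exact_mod_cast hj
      rw [nsmul_eq_mul]
      linarith
    intro m hm n hn
    simp only [Set.mem_setOf_eq]
    rw [Valuation.restrict_lt_iff_lt_embedding]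
    rcases le_total m n with hmn | hmn
    · exact lt_of_le_of_lt (hgap m n hmn) (key (m + 1) (by omega))
    · rw [Valuation.map_sub_swap]
      exact lt_of_le_of_lt (hgap n m hmn) (key (n + 1) (by omega))
  obtain ⟨x, hx⟩ := cauchySeq_tendsto_of_complete hcau
  have hfun : ∀ n, t n ^ 2 + t n + d = t n - t (n + 1) := by intro n; rw [hts]; ring
  have h1 : Tendsto (fun n => t n ^ 2 + t n + d) atTop (𝓝 (x ^ 2 + x + d)) :=
    ((hx.pow 2).add hx).add tendsto_const_nhds
  have h2 : Tendsto (fun n => t n - t (n + 1)) atTop (𝓝 (x - x)) :=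
    hx.sub (hx.comp (tendsto_add_atTop_nat 1))
  have heq : x ^ 2 + x + d = 0 := by
    have h1' : Tendsto (fun n => t n - t (n + 1)) atTop (𝓝 (x ^ 2 + x + d)) := by
      simpa only [hfun] using h1
    have h2' : Tendsto (fun n => t n - t (n + 1)) atTop (𝓝 (0 : K)) := by
      simpa using h2
    exact tendsto_nhds_unique h1' h2'
  exact ⟨1 + 2 * x, by linear_combination (-4 : K) * heq + hd4⟩


open IsDedekindDomain NumberField Multiplicative

-- helper: membership gives valuation bound
lemma intValuationDef_le_of_mem_pow {R : Type*} [CommRing R] [IsDedekindDomain R]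
    (v : HeightOneSpectrum R) {x : R} {n : ℕ} (hx : x ∈ v.asIdeal ^ n) :
    v.intValuationDef x ≤ Multiplicative.ofAdd (-(n : ℤ)) :=
  (v.intValuation_le_pow_iff_dvd x n).mpr (Ideal.dvd_span_singleton.mpr hx)

lemma exists_intValuationDef_eq {R : Type*} [CommRing R] [IsDedekindDomain R]
    (v : HeightOneSpectrum R) {r : R} (hr : r ≠ 0) :
    ∃ n : ℕ, v.intValuationDef r = Multiplicative.ofAdd (-(n : ℤ)) := by
  obtain ⟨a, ha⟩ := WithZero.ne_zero_iff_exists.mp (v.intValuation_ne_zero r hr)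
  have h1 : Multiplicative.toAdd a ≤ 0 := by
    have : (a : ℤₘ₀) ≤ ((1 : Multiplicative ℤ) : ℤₘ₀) := by
      rw [ha]; exact_mod_cast v.intValuation_le_one r
    rw [WithZero.coe_le_coe] at this
    exact this
  refine ⟨(Multiplicative.toAdd a).natAbs, ?_⟩
  rw [← HeightOneSpectrum.intValuation_apply, ← ha]
  congr 1
  have : Multiplicative.toAdd a = -((Multiplicative.toAdd a).natAbs : ℤ) := by omega
  conv_lhs => rw [← ofAdd_toAdd a, this]

/-- Weak approximation step: given a finite set `S` of nonzero primes of `𝓞 k`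
and a prime `𝔮 ∉ S`, there is `c ∈ k×` that is positive under every real
embedding, a square in `k_𝔭` for every `𝔭 ∈ S`, and has odd `𝔮`-adic valuation
(hence is not a square in `k`). -/
theorem exists_weak_approximation_element (k : Type*) [Field k] [NumberField k]
    (S : Finset (HeightOneSpectrum (𝓞 k))) (q : HeightOneSpectrum (𝓞 k))
    (hq : q ∉ S) :
    ∃ c : k, c ≠ 0 ∧
      (∀ σ : k →+* ℝ, 0 < σ c) ∧
      (∀ v ∈ S, IsSquare (algebraMap k (v.adicCompletion k) c)) ∧
      (∃ n : ℤ, Odd n ∧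
        q.valuation k c = (Multiplicative.ofAdd n : Multiplicative ℤ)) ∧
      ¬ IsSquare c := by
  classical
  obtain ⟨π, hπ⟩ := q.intValuation_exists_uniformizer
  have h4 : (4 : 𝓞 k) ≠ 0 := by
    have : ((4 : ℕ) : 𝓞 k) ≠ 0 := Nat.cast_ne_zero.mpr (by norm_num)
    exact_mod_cast this
  choose nf hnf using fun v : HeightOneSpectrum (𝓞 k) => exists_intValuationDef_eq v h4
  set s : Finset (HeightOneSpectrum (𝓞 k)) := insert q S with hs_def
  set e : HeightOneSpectrum (𝓞 k) → ℕ := fun v => if v = q then 2 else nf v + 1 with he_def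
  have hprime : ∀ i ∈ s, Prime i.asIdeal := fun i _ => i.prime
  have hcop : ∀ i ∈ s, ∀ j ∈ s, i ≠ j → i.asIdeal ≠ j.asIdeal := by
    intro i _ j _ hij h
    exact hij (HeightOneSpectrum.ext h)
  obtain ⟨y, hy⟩ := IsDedekindDomain.exists_forall_sub_mem_ideal
    (fun v : HeightOneSpectrum (𝓞 k) => v.asIdeal) e hprime hcop
    (fun i => if (i : HeightOneSpectrum (𝓞 k)) = q then π else 1)
  have hyq : y - π ∈ q.asIdeal ^ 2 := by
    have := hy q (Finset.mem_insert_self q S)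
    simpa [he_def] using this
  have hyv : ∀ v ∈ S, y - 1 ∈ v.asIdeal ^ (nf v + 1) := by
    intro v hv
    have hvq : v ≠ q := by rintro rfl; exact hq hv
    have := hy v (Finset.mem_insert_of_mem hv)
    simpa [he_def, hvq] using this
  set I : Ideal (𝓞 k) := ∏ i ∈ s, i.asIdeal ^ e i with hI_def
  have hI_ne : I ≠ ⊥ := by
    rw [hI_def, ← Ideal.zero_eq_bot]
    exact Finset.prod_ne_zero_iff.mpr fun i _ =>
      pow_ne_zero _ (by rw [Ideal.zero_eq_bot]; exact i.ne_bot)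
  set N : ℕ := Ideal.absNorm I with hN_def
  have hN_mem : (N : 𝓞 k) ∈ I := Ideal.absNorm_mem I
  have hN_pos : 0 < N :=
    Nat.pos_of_ne_zero fun h0 => hI_ne (Ideal.absNorm_eq_zero_iff.mp h0)
  have hIle : ∀ i ∈ s, I ≤ i.asIdeal ^ e i := fun i hi =>
    Ideal.le_of_dvd (Finset.dvd_prod_of_mem _ hi)
  -- finiteness of real embeddings
  have hinj : Function.Injective fun σ : k →+* ℝ => (algebraMap ℝ ℂ).comp σ := by
    intro σ τ hst
    ext x
    exact (algebraMap ℝ ℂ).injective (RingHom.congr_fun hst x)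
  haveI : Finite (k →+* ℝ) := Finite.of_injective _ hinj
  set yk : k := algebraMap (𝓞 k) k y with hyk_def
  obtain ⟨B, hB⟩ := (Set.finite_range fun σ : k →+* ℝ => -σ yk).bddAbove
  obtain ⟨m, hm⟩ := exists_nat_gt B
  set c₀ : 𝓞 k := y + ((m * N : ℕ) : 𝓞 k) with hc₀_def
  set c : k := algebraMap (𝓞 k) k c₀ with hc_def
  have hmN : ((m * N : ℕ) : 𝓞 k) ∈ I := by
    push_cast
    exact Ideal.mul_mem_left _ _ hN_mem
  have hcq : c₀ - π ∈ q.asIdeal ^ 2 := by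
    have h2 : ((m * N : ℕ) : 𝓞 k) ∈ q.asIdeal ^ 2 := by
      have := hIle q (Finset.mem_insert_self q S) hmN
      simpa [he_def] using this
    have : c₀ - π = (y - π) + ((m * N : ℕ) : 𝓞 k) := by rw [hc₀_def]; ring
    rw [this]
    exact add_mem hyq h2
  have hcv : ∀ v ∈ S, c₀ - 1 ∈ v.asIdeal ^ (nf v + 1) := by
    intro v hv
    have hvq : v ≠ q := by rintro rfl; exact hq hv
    have h2 : ((m * N : ℕ) : 𝓞 k) ∈ v.asIdeal ^ (nf v + 1) := by
      have := hIle v (Finset.mem_insert_of_mem hv) hmN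
      simpa [he_def, hvq] using this
    have : c₀ - 1 = (y - 1) + ((m * N : ℕ) : 𝓞 k) := by rw [hc₀_def]; ring
    rw [this]
    exact add_mem (hyv v hv) h2
  -- the valuation of c₀ at q
  have h21 : ((Multiplicative.ofAdd (-(2 : ℕ) : ℤ) : Multiplicative ℤ) : ℤₘ₀) <
      ((Multiplicative.ofAdd (-1 : ℤ) : Multiplicative ℤ) : ℤₘ₀) := by
    rw [WithZero.coe_lt_coe, Multiplicative.ofAdd_lt]
    norm_num
  have hvalc₀ : q.intValuationDef c₀ = Multiplicative.ofAdd (-1 : ℤ) := by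
    have hlt : q.intValuation (c₀ - π) < q.intValuation π := by
      rw [hπ]
      exact lt_of_le_of_lt (intValuationDef_le_of_mem_pow q hcq) h21
    have := Valuation.map_add_eq_of_lt_right q.intValuation hlt
    rw [sub_add_cancel] at this
    rw [← HeightOneSpectrum.intValuation_apply, this, hπ, WithZero.exp_eq_coe_ofAdd]
  have hvalc : q.valuation k c = (Multiplicative.ofAdd (-1 : ℤ) : Multiplicative ℤ) := by
    rw [hc_def, HeightOneSpectrum.valuation_of_algebraMap, HeightOneSpectrum.intValuation_apply, hvalc₀]
  refine ⟨c, ?_, ?_, ?_, ⟨-1, ⟨-1, by ring⟩, hvalc⟩, ?_⟩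
  · exact (Valuation.ne_zero_iff _).mp (by rw [hvalc]; exact WithZero.coe_ne_zero)
  · -- positivity
    intro σ
    have hσ : σ c = σ yk + (m * N : ℝ) := by
      rw [hc_def, hc₀_def, map_add, map_add, ← hyk_def, map_natCast, map_natCast]
      push_cast
      ring
    have hBσ : -σ yk ≤ B := hB ⟨σ, rfl⟩
    have h1N : (1 : ℝ) ≤ N := by exact_mod_cast hN_pos
    have hmm : (m : ℝ) ≤ (m : ℝ) * N := le_mul_of_one_le_right (by positivity) h1N
    rw [hσ]
    push_cast
    nlinarith [hm]
  · -- squares in completions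
    intro v hv
    apply isSquare_of_valued_lt
    have e1 : algebraMap k (v.adicCompletion k) c - 1 =
        algebraMap k (v.adicCompletion k) (c - 1) := by
      rw [RingHom.map_sub, RingHom.map_one]
    have e4 : (4 : v.adicCompletion k) = algebraMap k (v.adicCompletion k) (4 : k) :=
      (map_ofNat _ 4).symm
    rw [e1, e4]
    have v1 : Valued.v ((algebraMap k (v.adicCompletion k)) (c - 1)) = v.valuation k (c - 1) :=
      v.valuedAdicCompletion_eq_valuation' (c - 1)
    have v2 : Valued.v ((algebraMap k (v.adicCompletion k)) (4 : k)) = v.valuation k (4 : k) :=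
      v.valuedAdicCompletion_eq_valuation' (4 : k)
    rw [v1, v2]
    have e2 : (c - 1 : k) = algebraMap (𝓞 k) k (c₀ - 1) := by
      rw [hc_def, map_sub, map_one]
    have e3 : (4 : k) = algebraMap (𝓞 k) k (4 : 𝓞 k) := (map_ofNat _ 4).symm
    rw [e2, e3, HeightOneSpectrum.valuation_of_algebraMap,
      HeightOneSpectrum.valuation_of_algebraMap, HeightOneSpectrum.intValuation_apply, HeightOneSpectrum.intValuation_apply,
      hnf v]
    refine lt_of_le_of_lt (intValuationDef_le_of_mem_pow v (hcv v hv)) ?_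
    rw [WithZero.coe_lt_coe, Multiplicative.ofAdd_lt]
    push_cast
    omega
  · -- not a square
    rintro ⟨r, hr⟩
    rw [hr, map_mul] at hvalc
    have hr0 : q.valuation k r ≠ 0 := by
      intro h0
      rw [h0, mul_zero] at hvalc
      exact WithZero.coe_ne_zero hvalc.symm
    obtain ⟨u, hu⟩ := WithZero.ne_zero_iff_exists.mp hr0
    rw [← hu, ← WithZero.coe_mul] at hvalc
    have h2 := congrArg Multiplicative.toAdd (WithZero.coe_inj.mp hvalc)
    rw [toAdd_mul, toAdd_ofAdd] at h2
    omega
end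

section
/- Weak approximation (Artin–Whaples): let K be a field and let |·|₁, …, |·|ₙ be nontrivial absolute values on K that are pairwise inequivalent. Then for any elements a₁, …, aₙ ∈ K and any ε > 0 there exists x ∈ K such that |x − aᵢ|ᵢ < ε for all i = 1, …, n. -/
open Filter Real

section AW

variable {K : Type*} [Field K]

private lemma AW.exists_one_lt (v : AbsoluteValue K ℝ) (h : ∃ x : K, x ≠ 0 ∧ v x ≠ 1) :
    ∃ y : K, 1 < v y := by
  obtain ⟨x, hx0, hx1⟩ := h
  rcases lt_or_gt_of_ne hx1 with h1 | h1
  · refine ⟨x⁻¹, ?_⟩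
    rw [map_inv₀]
    exact (one_lt_inv₀ (v.pos hx0)).mpr h1
  · exact ⟨x, h1⟩

private lemma AW.key_equiv (v w : AbsoluteValue K ℝ) (hv : ∃ y : K, 1 < v y)
    (h : ∀ x : K, v x < 1 → w x < 1) : ∃ t : ℝ, 0 < t ∧ ∀ x : K, w x = (v x) ^ t := by
  obtain ⟨y, hy⟩ := hv
  have hy0 : y ≠ 0 := by
    rintro rfl; simp at hy; linarith
  have hvy : 0 < Real.log (v y) := Real.log_pos hy
  have hwy0 : 0 < w y := w.pos hy0
  have hwy1 : 1 < w y := by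
    have h1 : v y⁻¹ < 1 := by
      rw [map_inv₀]; exact (inv_lt_one₀ (v.pos hy0)).mpr hy
    have h2 := h _ h1
    rw [map_inv₀] at h2
    exact (inv_lt_one₀ hwy0).mp h2
  have hwy : 0 < Real.log (w y) := Real.log_pos hwy1
  have C : ∀ (a b : K), a ≠ 0 → b ≠ 0 → ∀ p q : ℤ,
      (p : ℝ) * Real.log (v a) < q * Real.log (v b) →
      (p : ℝ) * Real.log (w a) < q * Real.log (w b) := by
    intro a b ha hb p q hpq
    have hva : 0 < v a := v.pos ha
    have hvb : 0 < v b := v.pos hb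
    have hwa : 0 < w a := w.pos ha
    have hwb : 0 < w b := w.pos hb
    have h1 : v (a ^ p / b ^ q) < 1 := by
      rw [map_div₀, map_zpow₀, map_zpow₀, div_lt_one (zpow_pos hvb q)]
      rw [← Real.log_lt_log_iff (zpow_pos hva p) (zpow_pos hvb q)]
      rwa [Real.log_zpow, Real.log_zpow]
    have h2 := h _ h1
    rw [map_div₀, map_zpow₀, map_zpow₀, div_lt_one (zpow_pos hwb q)] at h2
    have h3 := Real.log_lt_log (zpow_pos hwa p) h2
    rwa [Real.log_zpow, Real.log_zpow] at h3
  have ht : 0 < Real.log (w y) / Real.log (v y) := div_pos hwy hvy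
  refine ⟨Real.log (w y) / Real.log (v y), ht, ?_⟩
  intro x
  rcases eq_or_ne x 0 with rfl | hx
  · simp [Real.zero_rpow (ne_of_gt ht)]
  · have hvx : 0 < v x := v.pos hx
    have hwx : 0 < w x := w.pos hx
    have key : Real.log (w x) / Real.log (w y) = Real.log (v x) / Real.log (v y) := by
      by_contra hne
      rcases lt_or_gt_of_ne hne with hlt | hgt
      · obtain ⟨r, hr1, hr2⟩ := exists_rat_btwn hlt
        have hden : (0 : ℝ) < (r.den : ℝ) := by exact_mod_cast r.pos
        rw [Rat.cast_def, div_lt_div_iff₀ hden hvy] at hr2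
        -- hr2 : r.num * log (v y) < log (v x) * r.den
        have hC := C y x hy0 hx r.num (r.den : ℤ) (by push_cast; linarith)
        rw [Rat.cast_def, div_lt_div_iff₀ hwy hden] at hr1
        push_cast at hC
        linarith
      · obtain ⟨r, hr1, hr2⟩ := exists_rat_btwn hgt
        have hden : (0 : ℝ) < (r.den : ℝ) := by exact_mod_cast r.pos
        rw [Rat.cast_def, div_lt_div_iff₀ hvy hden] at hr1
        have hC := C x y hx hy0 (r.den : ℤ) r.num (by push_cast; linarith)
        rw [Rat.cast_def, div_lt_div_iff₀ hden hwy] at hr2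
        push_cast at hC
        linarith
    have hlog : Real.log (w x) = Real.log (v x) * (Real.log (w y) / Real.log (v y)) := by
      have h1 : Real.log (w x) = (Real.log (v x) / Real.log (v y)) * Real.log (w y) := by
        rw [← key, div_mul_cancel₀ _ (ne_of_gt hwy)]
      rw [h1]; ring
    rw [Real.rpow_def_of_pos hvx, ← hlog, Real.exp_log hwx]

private lemma AW.step_two (v w : AbsoluteValue K ℝ) (hv : ∃ y : K, 1 < v y)
    (hw : ∃ y : K, 1 < w y)
    (h1 : ¬ ∃ t : ℝ, 0 < t ∧ ∀ x : K, w x = (v x) ^ t)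
    (h2 : ¬ ∃ t : ℝ, 0 < t ∧ ∀ x : K, v x = (w x) ^ t) :
    ∃ z : K, 1 < v z ∧ w z < 1 := by
  have hx : ∃ x : K, v x < 1 ∧ 1 ≤ w x := by
    by_contra hc
    push_neg at hc
    exact h1 (AW.key_equiv v w hv (fun x hx => hc x hx))
  have hy : ∃ y : K, w y < 1 ∧ 1 ≤ v y := by
    by_contra hc
    push_neg at hc
    exact h2 (AW.key_equiv w v hw (fun x hx => hc x hx))
  obtain ⟨x, hx1, hx2⟩ := hx
  obtain ⟨y, hy1, hy2⟩ := hy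
  have hx0 : x ≠ 0 := by rintro rfl; simp at hx2; linarith
  have hvx : 0 < v x := v.pos hx0
  have hwx : 0 < w x := w.pos hx0
  refine ⟨y * x⁻¹, ?_, ?_⟩
  · rw [map_mul, map_inv₀]
    have h3 : 1 < (v x)⁻¹ := (one_lt_inv₀ hvx).mpr hx1
    calc (1:ℝ) < (v x)⁻¹ := h3
      _ = 1 * (v x)⁻¹ := (one_mul _).symm
      _ ≤ v y * (v x)⁻¹ := by
          apply mul_le_mul_of_nonneg_right hy2 (le_of_lt (by positivity))
  · rw [map_mul, map_inv₀]
    have h3 : (w x)⁻¹ ≤ 1 := (inv_le_one₀ hwx).mpr hx2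
    calc w y * (w x)⁻¹ ≤ w y * 1 := by
          apply mul_le_mul_of_nonneg_left h3 (w.nonneg y)
      _ = w y := mul_one _
      _ < 1 := hy1

private lemma AW.abv_add_ge (v : AbsoluteValue K ℝ) (a b : K) : v a - v b ≤ v (a + b) := by
  have h := v.add_le (a + b) (-b)
  rw [add_neg_cancel_right, v.map_neg] at h
  linarith

/-- If `v z < 1` then `z^m/(1+z^m) → 0` under `v`. -/
private lemma AW.tendsto_s_of_lt (v : AbsoluteValue K ℝ) (z : K) (hz : v z < 1) :
    Tendsto (fun m : ℕ => v (z ^ m / (1 + z ^ m))) atTop (nhds 0) := by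
  have h0 : Tendsto (fun m : ℕ => (v z) ^ m) atTop (nhds 0) :=
    tendsto_pow_atTop_nhds_zero_of_lt_one (v.nonneg z) hz
  have hg : Tendsto (fun m : ℕ => (v z) ^ m / (1 - (v z) ^ m)) atTop (nhds 0) := by
    have hden : Tendsto (fun m : ℕ => 1 - (v z) ^ m) atTop (nhds 1) := by
      simpa using tendsto_const_nhds.sub h0
    have h := h0.div hden one_ne_zero
    rw [zero_div] at h
    exact h
  apply squeeze_zero' (Eventually.of_forall fun m => v.nonneg _) _ hg
  filter_upwards [eventually_ge_atTop 1] with m hm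
  have hzm : (v z) ^ m < 1 := by
    calc (v z) ^ m ≤ (v z) ^ 1 := pow_le_pow_of_le_one (v.nonneg z) hz.le hm
      _ = v z := pow_one _
      _ < 1 := hz
  have hd : 1 - (v z) ^ m ≤ v (1 + z ^ m) := by
    have := AW.abv_add_ge v 1 (z ^ m)
    rw [map_one, map_pow] at this
    exact this
  have hdpos : 0 < 1 - (v z) ^ m := by linarith
  rw [map_div₀, map_pow]
  exact div_le_div_of_nonneg_left (pow_nonneg (v.nonneg z) m) hdpos hd

/-- If `1 < v z` then `z^m/(1+z^m) → 1` under `v` (difference form). -/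
private lemma AW.tendsto_s_of_gt (v : AbsoluteValue K ℝ) (z : K) (hz : 1 < v z) :
    Tendsto (fun m : ℕ => v (z ^ m / (1 + z ^ m) - 1)) atTop (nhds 0) := by
  have h0 : Tendsto (fun m : ℕ => (v z) ^ m) atTop atTop :=
    tendsto_pow_atTop_atTop_of_one_lt hz
  have hg : Tendsto (fun m : ℕ => ((v z) ^ m - 1)⁻¹) atTop (nhds 0) := by
    apply Tendsto.inv_tendsto_atTop
    exact tendsto_atTop_add_const_right _ (-1) h0
  apply squeeze_zero' (Eventually.of_forall fun m => v.nonneg _) _ hg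
  filter_upwards [eventually_ge_atTop 1] with m hm
  have hzm : 1 < (v z) ^ m := one_lt_pow₀ hz (by omega)
  have hne : (1 : K) + z ^ m ≠ 0 := by
    intro hc
    have h1 : z ^ m = -1 := by linear_combination hc
    have h2 : v (z ^ m) = 1 := by rw [h1, v.map_neg, v.map_one]
    rw [map_pow] at h2
    linarith
  have hd : (v z) ^ m - 1 ≤ v (1 + z ^ m) := by
    have h4 := AW.abv_add_ge v (z ^ m) 1
    rw [v.map_one, map_pow, add_comm (z ^ m) (1 : K)] at h4
    exact h4
  have hdpos : 0 < (v z) ^ m - 1 := by linarith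
  have heq : z ^ m / (1 + z ^ m) - 1 = -(1 + z ^ m)⁻¹ := by
    field_simp
    ring
  rw [heq, v.map_neg, map_inv₀]
  exact inv_anti₀ hdpos hd

/-- `v (g m) → 1` when `v (g m - 1) → 0`. -/
private lemma AW.tendsto_abv_one (v : AbsoluteValue K ℝ) (g : ℕ → K)
    (h : Tendsto (fun m => v (g m - 1)) atTop (nhds 0)) :
    Tendsto (fun m => v (g m)) atTop (nhds 1) := by
  rw [tendsto_iff_dist_tendsto_zero]
  apply squeeze_zero' (Eventually.of_forall fun m => dist_nonneg) _ h
  filter_upwards with m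
  have := v.abs_abv_sub_le_abv_sub (g m) 1
  rw [map_one] at this
  simpa [Real.dist_eq] using this

private lemma AW.step_one : ∀ (n : ℕ) (v : Fin (n + 1) → AbsoluteValue K ℝ),
    (∀ i, ∃ x : K, x ≠ 0 ∧ v i x ≠ 1) →
    (∀ i j, i ≠ j → ¬ ∃ t : ℝ, 0 < t ∧ ∀ x : K, v j x = (v i x) ^ t) →
    ∃ z : K, 1 < v 0 z ∧ ∀ i, i ≠ 0 → v i z < 1 := by
  intro n
  induction n with
  | zero =>
    intro v hnt _
    obtain ⟨y, hy⟩ := AW.exists_one_lt (v 0) (hnt 0)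
    refine ⟨y, hy, fun i hi => absurd ?_ hi⟩
    have h1 := i.isLt
    exact Fin.ext (by simp)
  | succ n ih =>
    intro v hnt hineq
    obtain ⟨z, hz0, hzm⟩ := ih (fun j => v j.castSucc) (fun j => hnt _)
      (fun i j hij => hineq _ _ (fun hc => hij (Fin.castSucc_injective _ hc)))
    rw [Fin.castSucc_zero] at hz0
    set L : Fin (n + 2) := Fin.last (n + 1) with hL
    have hL0 : L ≠ 0 := by
      rw [hL]; exact Fin.last_pos.ne'
    obtain ⟨w, hw0, hwL⟩ := AW.step_two (v 0) (v L)
      (AW.exists_one_lt _ (hnt 0)) (AW.exists_one_lt _ (hnt L))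
      (hineq 0 L hL0.symm) (hineq L 0 hL0)
    -- reduce: find x with 1 < v 0 x, v L x < 1, and middle values < 1
    suffices hsuf : ∃ x : K, 1 < v 0 x ∧ v L x < 1 ∧
        ∀ j : Fin (n + 1), j ≠ 0 → v j.castSucc x < 1 by
      obtain ⟨x, h1, h2, h3⟩ := hsuf
      refine ⟨x, h1, fun i hi => ?_⟩
      rcases eq_or_ne i L with rfl | hiL
      · exact h2
      · obtain ⟨j, rfl⟩ := Fin.exists_castSucc_eq.mpr hiL
        apply h3
        intro hc
        apply hi
        rw [hc, Fin.castSucc_zero]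
    rcases lt_trichotomy (v L z) 1 with hc | hc | hc
    · exact ⟨z, hz0, hc, hzm⟩
    · -- v L z = 1 : use z ^ m * w
      have hev : ∀ᶠ m : ℕ in atTop, ∀ j : Fin (n + 1), j ≠ 0 →
          v j.castSucc (z ^ m * w) < 1 := by
        rw [eventually_all]
        intro j
        rcases eq_or_ne j 0 with rfl | hj
        · simp
        · have hlt := hzm j hj
          have htend : Tendsto (fun m : ℕ => v j.castSucc (z ^ m * w)) atTop (nhds 0) := by
            have h1 : Tendsto (fun m : ℕ => (v j.castSucc z) ^ m * v j.castSucc w)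
                atTop (nhds 0) := by
              simpa using
                (tendsto_pow_atTop_nhds_zero_of_lt_one ((v j.castSucc).nonneg z) hlt).mul_const
                  (v j.castSucc w)
            simpa [map_mul, map_pow] using h1
          exact (htend.eventually (eventually_lt_nhds one_pos)).mono fun m hm _ => hm
      obtain ⟨m, hm⟩ := hev.exists
      refine ⟨z ^ m * w, ?_, ?_, hm⟩
      · rw [map_mul, map_pow]
        calc (1:ℝ) < v 0 w := hw0
          _ = 1 * v 0 w := (one_mul _).symm
          _ ≤ (v 0 z) ^ m * v 0 w :=
            mul_le_mul_of_nonneg_right (one_le_pow₀ hz0.le) ((v 0).nonneg w)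
      · rw [map_mul, map_pow, hc, one_pow, one_mul]
        exact hwL
    · -- 1 < v L z : use (z^m/(1+z^m)) * w
      set s : ℕ → K := fun m => z ^ m / (1 + z ^ m) with hs
      have h0 : Tendsto (fun m => v 0 (s m)) atTop (nhds 1) :=
        AW.tendsto_abv_one _ _ (AW.tendsto_s_of_gt (v 0) z hz0)
      have hLs : Tendsto (fun m => v L (s m)) atTop (nhds 1) :=
        AW.tendsto_abv_one _ _ (AW.tendsto_s_of_gt (v L) z hc)
      have hev1 : ∀ᶠ m : ℕ in atTop, 1 < v 0 (s m * w) := by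
        have : Tendsto (fun m => v 0 (s m) * v 0 w) atTop (nhds (v 0 w)) := by
          simpa using h0.mul_const (v 0 w)
        have h2 := this.eventually (eventually_gt_nhds hw0)
        filter_upwards [h2] with m hm
        rwa [map_mul]
      have hev2 : ∀ᶠ m : ℕ in atTop, v L (s m * w) < 1 := by
        have : Tendsto (fun m => v L (s m) * v L w) atTop (nhds (v L w)) := by
          simpa using hLs.mul_const (v L w)
        have h2 := this.eventually (eventually_lt_nhds hwL)
        filter_upwards [h2] with m hm
        rwa [map_mul]
      have hev3 : ∀ᶠ m : ℕ in atTop, ∀ j : Fin (n + 1), j ≠ 0 →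
          v j.castSucc (s m * w) < 1 := by
        rw [eventually_all]
        intro j
        rcases eq_or_ne j 0 with rfl | hj
        · simp
        · have htend : Tendsto (fun m => v j.castSucc (s m) * v j.castSucc w)
              atTop (nhds 0) := by
            have h5 := (AW.tendsto_s_of_lt (v j.castSucc) z (hzm j hj)).mul_const
              (v j.castSucc w)
            simpa [hs] using h5
          have h2 := htend.eventually (eventually_lt_nhds one_pos)
          filter_upwards [h2] with m hm _
          rwa [map_mul]
      obtain ⟨m, h1, h2, h3⟩ := (hev1.and (hev2.and hev3)).exists
      exact ⟨s m * w, h1, h2, h3⟩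

end AW

/-- Weak approximation (Artin–Whaples): if `|·|₁, …, |·|ₙ` are nontrivial,
pairwise inequivalent absolute values on a field `K`, then for any
`a₁, …, aₙ ∈ K` and `ε > 0` there is `x ∈ K` with `|x - aᵢ|ᵢ < ε` for all `i`. -/
theorem weak_approximation_artin_whaples (K : Type*) [Field K] (n : ℕ)
    (f : Fin n → AbsoluteValue K ℝ)
    (hnontriv : ∀ i, ∃ x : K, x ≠ 0 ∧ f i x ≠ 1)
    (hineq : ∀ i j, i ≠ j →
      ¬ ∃ t : ℝ, 0 < t ∧ ∀ x : K, f j x = (f i x) ^ t)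
    (a : Fin n → K) (ε : ℝ) (hε : 0 < ε) :
    ∃ x : K, ∀ i, f i (x - a i) < ε := by
  obtain _ | n := n
  · exact ⟨0, fun i => i.elim0⟩
  -- for each i get zᵢ with 1 < f i zᵢ and f j zᵢ < 1 for j ≠ i
  have hz : ∀ i : Fin (n + 1), ∃ z : K, 1 < f i z ∧ ∀ j, j ≠ i → f j z < 1 := by
    intro i
    set e : Equiv.Perm (Fin (n + 1)) := Equiv.swap 0 i with he
    obtain ⟨z, h1, h2⟩ := AW.step_one n (fun k => f (e k))
      (fun k => hnontriv _)
      (fun k k' hkk' => hineq _ _ (fun hc => hkk' (e.injective hc)))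
    refine ⟨z, ?_, ?_⟩
    · rwa [he, Equiv.swap_apply_left] at h1
    · intro j hj
      have hj' : e j ≠ 0 := by
        intro hc
        apply hj
        have h0 : e (e j) = e 0 := by rw [hc]
        simp only [he, Equiv.swap_apply_self, Equiv.swap_apply_left] at h0
        exact h0
      have := h2 (e j) hj'
      rwa [show e (e j) = j from Equiv.swap_apply_self 0 i j] at this
  choose z hz1 hz2 using hz
  set s : ℕ → Fin (n + 1) → K := fun m i => z i ^ m / (1 + z i ^ m) with hs
  set x : ℕ → K := fun m => ∑ i, a i * s m i with hx
  have hbound : ∀ (j : Fin (n + 1)) (m : ℕ),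
      f j (x m - a j) ≤ ∑ i, f j (a i * s m i - if i = j then a j else 0) := by
    intro j m
    have heq : x m - a j = ∑ i, (a i * s m i - if i = j then a j else 0) := by
      rw [Finset.sum_sub_distrib, Finset.sum_ite_eq']
      simp [hx]
    rw [heq]
    exact (f j).sum_le _ _
  have htend : ∀ j : Fin (n + 1),
      Tendsto (fun m => f j (x m - a j)) atTop (nhds 0) := by
    intro j
    apply squeeze_zero' (Eventually.of_forall fun m => (f j).nonneg _)
      (Eventually.of_forall fun m => hbound j m)
    have : Tendsto (fun m => ∑ i : Fin (n + 1),
        f j (a i * s m i - if i = j then a j else 0)) atTop (nhds (∑ _i : Fin (n + 1), 0)) := by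
      apply tendsto_finset_sum
      intro i _
      rcases eq_or_ne i j with rfl | hij
      · have h6 : Tendsto (fun m => f i (a i) * f i (s m i - 1)) atTop (nhds 0) := by
          have h7 := (AW.tendsto_s_of_gt (f i) (z i) (hz1 i)).const_mul (f i (a i))
          simpa [hs] using h7
        apply h6.congr
        intro m
        rw [if_pos rfl, ← map_mul, mul_sub, mul_one]
      · have h6 : Tendsto (fun m => f j (a i) * f j (s m i)) atTop (nhds 0) := by
          have h7 := (AW.tendsto_s_of_lt (f j) (z i) (hz2 i j (Ne.symm hij))).const_mul
            (f j (a i))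
          simpa [hs] using h7
        apply h6.congr
        intro m
        rw [if_neg hij, sub_zero, map_mul]
    simpa using this
  have hev : ∀ᶠ m : ℕ in atTop, ∀ j : Fin (n + 1), f j (x m - a j) < ε := by
    rw [eventually_all]
    exact fun j => (htend j).eventually (eventually_lt_nhds hε)
  obtain ⟨m, hm⟩ := hev.exists
  exact ⟨x m, hm⟩
end
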